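/- For every n ≥ 0, the quadruple (asc, des, MNA, MND) on S_n(231,312) has the same distribution as (des, asc, MND, MNA) on S_n(213,231). -/
import Mathlib


/-- The value of `π` at position `i` (0-based), as a natural number; `0` if out of range. -/
def pv {n : ℕ} (π : Equiv.Perm (Fin n)) (i : ℕ) : ℕ :=
  if h : i < n then (π ⟨i, h⟩ : ℕ) else 0

/-- The set of ascent positions (0-based) of `π`. -/
def ascents {n : ℕ} (π : Equiv.Perm (Fin n)) : Finset ℕ :=
  (Finset.range (n - 1)).filter fun i => pv π i < pv π (i + 1)

/-- The set of descent positions (0-based) of `π`. -/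
def descents {n : ℕ} (π : Equiv.Perm (Fin n)) : Finset ℕ :=
  (Finset.range (n - 1)).filter fun i => pv π (i + 1) < pv π i

def asc {n : ℕ} (π : Equiv.Perm (Fin n)) : ℕ := (ascents π).card

def des {n : ℕ} (π : Equiv.Perm (Fin n)) : ℕ := (descents π).card

/-- The maximum number of non-overlapping ascents of `π`. -/
noncomputable def MNA {n : ℕ} (π : Equiv.Perm (Fin n)) : ℕ :=
  sSup {k | ∃ S ⊆ ascents π, S.card = k ∧ ∀ i ∈ S, ∀ j ∈ S, i < j → i + 1 < j}

/-- The maximum number of non-overlapping descents of `π`. -/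
noncomputable def MND {n : ℕ} (π : Equiv.Perm (Fin n)) : ℕ :=
  sSup {k | ∃ S ⊆ descents π, S.card = k ∧ ∀ i ∈ S, ∀ j ∈ S, i < j → i + 1 < j}

def IsLRMax {n : ℕ} (π : Equiv.Perm (Fin n)) (i : Fin n) : Prop := ∀ j, j < i → π j < π i
def IsRLMax {n : ℕ} (π : Equiv.Perm (Fin n)) (i : Fin n) : Prop := ∀ j, i < j → π j < π i
def IsLRMin {n : ℕ} (π : Equiv.Perm (Fin n)) (i : Fin n) : Prop := ∀ j, j < i → π i < π j
def IsRLMin {n : ℕ} (π : Equiv.Perm (Fin n)) (i : Fin n) : Prop := ∀ j, i < j → π i < π j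

noncomputable def lrmax {n : ℕ} (π : Equiv.Perm (Fin n)) : ℕ := Nat.card {i : Fin n // IsLRMax π i}
noncomputable def rlmax {n : ℕ} (π : Equiv.Perm (Fin n)) : ℕ := Nat.card {i : Fin n // IsRLMax π i}
noncomputable def lrmin {n : ℕ} (π : Equiv.Perm (Fin n)) : ℕ := Nat.card {i : Fin n // IsLRMin π i}
noncomputable def rlmin {n : ℕ} (π : Equiv.Perm (Fin n)) : ℕ := Nat.card {i : Fin n // IsRLMin π i}

def Avoids123 {n : ℕ} (π : Equiv.Perm (Fin n)) : Prop :=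
  ¬ ∃ i j k : Fin n, i < j ∧ j < k ∧ π i < π j ∧ π j < π k
def Avoids132 {n : ℕ} (π : Equiv.Perm (Fin n)) : Prop :=
  ¬ ∃ i j k : Fin n, i < j ∧ j < k ∧ π i < π k ∧ π k < π j
def Avoids213 {n : ℕ} (π : Equiv.Perm (Fin n)) : Prop :=
  ¬ ∃ i j k : Fin n, i < j ∧ j < k ∧ π j < π i ∧ π i < π k
def Avoids231 {n : ℕ} (π : Equiv.Perm (Fin n)) : Prop :=
  ¬ ∃ i j k : Fin n, i < j ∧ j < k ∧ π k < π i ∧ π i < π j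
def Avoids312 {n : ℕ} (π : Equiv.Perm (Fin n)) : Prop :=
  ¬ ∃ i j k : Fin n, i < j ∧ j < k ∧ π j < π k ∧ π k < π i
def Avoids321 {n : ℕ} (π : Equiv.Perm (Fin n)) : Prop :=
  ¬ ∃ i j k : Fin n, i < j ∧ j < k ∧ π k < π j ∧ π j < π i


open Finset

lemma pv_pos {n : ℕ} (π : Equiv.Perm (Fin n)) {i : ℕ} (h : i < n) :
    pv π i = (π ⟨i, h⟩ : ℕ) := dif_pos h

lemma mem_ascents {n : ℕ} (π : Equiv.Perm (Fin n)) (i : ℕ) :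
    i ∈ ascents π ↔ i < n - 1 ∧ pv π i < pv π (i+1) := by
  simp [ascents, Finset.mem_filter, Finset.mem_range, and_comm]

lemma mem_descents {n : ℕ} (π : Equiv.Perm (Fin n)) (i : ℕ) :
    i ∈ descents π ↔ i < n - 1 ∧ pv π (i+1) < pv π i := by
  simp [descents, Finset.mem_filter, Finset.mem_range, and_comm]

lemma pv_ne {n : ℕ} (π : Equiv.Perm (Fin n)) {i j : ℕ} (hi : i < n) (hj : j < n)
    (hij : i ≠ j) : pv π i ≠ pv π j := by
  rw [pv_pos π hi, pv_pos π hj]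
  intro h
  have h2 : π ⟨i, hi⟩ = π ⟨j, hj⟩ := Fin.ext h
  have := π.injective h2
  exact hij (by simpa [Fin.ext_iff] using this)

lemma ascents_subset {n : ℕ} (π : Equiv.Perm (Fin n)) : ascents π ⊆ Finset.range (n-1) :=
  Finset.filter_subset _ _

lemma descents_subset {n : ℕ} (π : Equiv.Perm (Fin n)) : descents π ⊆ Finset.range (n-1) :=
  Finset.filter_subset _ _

/-- descents = range (n-1) \ ascents -/
lemma descents_eq {n : ℕ} (π : Equiv.Perm (Fin n)) :
    descents π = Finset.range (n-1) \ ascents π := by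
  ext i
  simp only [mem_descents, mem_ascents, Finset.mem_sdiff, Finset.mem_range]
  constructor
  · intro ⟨h1, h2⟩; exact ⟨h1, fun h => absurd h.2 (by omega)⟩
  · intro ⟨h1, h2⟩
    refine ⟨h1, ?_⟩
    have hne := pv_ne π (show i < n by omega) (show i+1 < n by omega) (by omega)
    have : ¬ (pv π i < pv π (i+1)) := fun h => h2 ⟨h1, h⟩
    omega

lemma ascents_eq {n : ℕ} (π : Equiv.Perm (Fin n)) :
    ascents π = Finset.range (n-1) \ descents π := by
  rw [descents_eq]
  have h := ascents_subset π
  ext i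
  simp only [Finset.mem_sdiff, Finset.mem_range]
  constructor
  · intro hi
    exact ⟨by have := h hi; simpa using this, fun h2 => h2.2 hi⟩
  · intro ⟨h1, h2⟩
    by_contra h3
    exact h2 ⟨h1, h3⟩


lemma filter_range_lt_eq (y n : ℕ) (h : y ≤ n) :
    (Finset.range n).filter (fun j => j < y) = Finset.range y := by
  ext j; simp only [mem_filter, mem_range]; omega

lemma card_filter_fin (n : ℕ) (Q : ℕ → Prop) [DecidablePred Q] :
    (Finset.univ.filter fun j : Fin n => Q j.val).card = ((Finset.range n).filter Q).card := by
  apply Finset.card_bij (fun j _ => j.val)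
  · intro a ha; simp only [mem_filter, mem_range, mem_univ] at ha ⊢; exact ⟨a.isLt, ha.2⟩
  · intro a _ b _ h; exact Fin.ext h
  · intro b hb; simp only [mem_filter, mem_range] at hb
    exact ⟨⟨b, hb.1⟩, by simp [hb.2], rfl⟩

lemma perm_val_eq_card {n : ℕ} (π : Equiv.Perm (Fin n)) (x : Fin n) :
    (π x : ℕ) = (Finset.univ.filter fun j => π j < π x).card := by
  have h1 : (Finset.univ.filter fun j : Fin n => π j < π x).card
      = (Finset.univ.filter fun j : Fin n => j < π x).card := by
    apply Finset.card_bij (fun j _ => π j)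
    · intro a ha; simp only [mem_filter, mem_univ, true_and] at ha ⊢; exact ha
    · intro a _ b _ h; exact π.injective h
    · intro b hb; simp only [mem_filter, mem_univ, true_and] at hb
      exact ⟨π.symm b, by simpa using hb, by simp⟩
  rw [h1]
  have := card_filter_fin n (fun j => j < (π x : ℕ))
  simp only [Fin.lt_def] at this ⊢
  rw [this, filter_range_lt_eq _ _ (le_of_lt (π x).isLt), card_range]

-- class 2 construction
def cD (D : Finset ℕ) (i : ℕ) : ℕ := (D ∩ Finset.range i).card

def g2 (n : ℕ) (D : Finset ℕ) (i : ℕ) : ℕ := if i ∈ D then n - 1 - cD D i else i - cD D i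

lemma cD_le (D : Finset ℕ) (i : ℕ) : cD D i ≤ i := by
  have := Finset.card_le_card (Finset.inter_subset_right (s₁ := D) (s₂ := Finset.range i))
  simpa [cD] using this

lemma cD_le_card (D : Finset ℕ) (i : ℕ) : cD D i ≤ D.card :=
  Finset.card_le_card Finset.inter_subset_left

lemma cD_lt_card {D : Finset ℕ} {i : ℕ} (h : i ∈ D) : cD D i < D.card := by
  have hsub : D ∩ Finset.range i ⊆ D.erase i := by
    intro a ha
    simp only [mem_inter, mem_range] at ha
    exact Finset.mem_erase.2 ⟨by omega, ha.1⟩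
  calc cD D i ≤ (D.erase i).card := Finset.card_le_card hsub
    _ < D.card := Finset.card_erase_lt_of_mem h

lemma cD_succ_mem {D : Finset ℕ} {i j : ℕ} (h : i ∈ D) (hij : i < j) :
    cD D i + 1 ≤ cD D j := by
  have hsub : insert i (D ∩ Finset.range i) ⊆ D ∩ Finset.range j := by
    intro a ha
    simp only [mem_insert, mem_inter, mem_range] at ha ⊢
    rcases ha with rfl | ⟨h1, h2⟩
    · exact ⟨h, hij⟩
    · exact ⟨h1, by omega⟩
  have := Finset.card_le_card hsub
  rwa [Finset.card_insert_of_notMem (by simp)] at this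

lemma cD_gap {D : Finset ℕ} {i j : ℕ} (h : i ∉ D) (hij : i < j) :
    cD D j ≤ cD D i + (j - (i + 1)) := by
  have hsub : D ∩ Finset.range j ⊆ (D ∩ Finset.range i) ∪ Finset.Ico (i+1) j := by
    intro a ha
    simp only [mem_inter, mem_range, mem_union, mem_Ico] at ha ⊢
    rcases ha with ⟨h1, h2⟩
    by_cases hc : a < i
    · exact Or.inl ⟨h1, hc⟩
    · right; constructor; · rcases Nat.lt_or_ge a (i+1) with h' | h'
                            · exfalso; have : a = i := by omega
                              exact h (this ▸ h1)
                            · exact h'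
      · exact h2
  calc cD D j ≤ _ := Finset.card_le_card hsub
    _ ≤ (D ∩ Finset.range i).card + (Finset.Ico (i+1) j).card := Finset.card_union_le _ _
    _ = cD D i + (j - (i+1)) := by rw [Nat.card_Ico]; rfl

lemma card_range_sdiff (D : Finset ℕ) (j : ℕ) :
    (Finset.range j \ D).card = j - cD D j := by
  have : Finset.range j \ D = Finset.range j \ (D ∩ Finset.range j) := by
    ext a; simp only [mem_sdiff, mem_inter, mem_range]; tauto
  rw [this, Finset.card_sdiff_of_subset Finset.inter_subset_right, Finset.card_range]
  unfold cD
  rw [Finset.inter_comm]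

lemma notmem_bound {n : ℕ} {D : Finset ℕ} (hD : D ⊆ Finset.range (n-1)) {j : ℕ}
    (hj : j ≤ n - 1) : j - cD D j ≤ (n-1) - D.card := by
  have hsub : Finset.range j \ D ⊆ Finset.range (n-1) \ D := by
    intro a ha; simp only [mem_sdiff, mem_range] at ha ⊢; exact ⟨by omega, ha.2⟩
  have h2 := Finset.card_le_card hsub
  rw [card_range_sdiff, card_range_sdiff] at h2
  have h3 : cD D (n-1) = D.card := by
    rw [cD, Finset.inter_eq_left.2 hD]
  omega

-- main order lemma
lemma g2_lt_of_mem {n : ℕ} {D : Finset ℕ} (hD : D ⊆ Finset.range (n-1)) {i j : ℕ}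
    (hi : i ∈ D) (hij : i < j) (hj : j < n) : g2 n D j < g2 n D i := by
  have hDcard : D.card ≤ n - 1 := by
    have := Finset.card_le_card hD; simpa using this
  have hin : i < n - 1 := by have := hD hi; simpa using this
  have h1 : cD D i < D.card := cD_lt_card hi
  by_cases hj2 : j ∈ D
  · have h2 := cD_succ_mem hi hij
    have h3 : cD D j ≤ D.card := cD_le_card D j
    simp only [g2, if_pos hi, if_pos hj2]
    omega
  · have h2 : j - cD D j ≤ (n-1) - D.card := notmem_bound hD (by omega)
    simp only [g2, if_pos hi, if_neg hj2]
    omega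

lemma g2_lt_of_notMem {n : ℕ} {D : Finset ℕ} (hD : D ⊆ Finset.range (n-1)) {i j : ℕ}
    (hi : i ∉ D) (hij : i < j) (hj : j < n) : g2 n D i < g2 n D j := by
  have hDcard : D.card ≤ n - 1 := by
    have := Finset.card_le_card hD; simpa using this
  have hci : cD D i ≤ i := cD_le D i
  by_cases hj2 : j ∈ D
  · have hjn : j < n - 1 := by have := hD hj2; simpa using this
    have h1 : cD D j < D.card := cD_lt_card hj2
    have h2 : i - cD D i ≤ (n-1) - D.card := notmem_bound hD (by omega)
    simp only [g2, if_neg hi, if_pos hj2]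
    omega
  · have h2 := cD_gap hi hij
    have hcj : cD D j ≤ j := cD_le D j
    simp only [g2, if_neg hi, if_neg hj2]
    omega

lemma g2_lt_n {n : ℕ} {D : Finset ℕ} (hD : D ⊆ Finset.range (n-1)) {i : ℕ} (hi : i < n) :
    g2 n D i < n := by
  by_cases h : i ∈ D
  · have := hD h; simp only [mem_range] at this
    simp only [g2, if_pos h]; omega
  · have := cD_le D i
    simp only [g2, if_neg h]; omega

lemma g2_injOn {n : ℕ} {D : Finset ℕ} (hD : D ⊆ Finset.range (n-1)) {i j : ℕ}
    (hi : i < n) (hj : j < n) (hij : i ≠ j) : g2 n D i ≠ g2 n D j := by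
  rcases Nat.lt_or_ge i j with h | h
  · by_cases hm : i ∈ D
    · exact (g2_lt_of_mem hD hm h hj).ne'
    · exact (g2_lt_of_notMem hD hm h hj).ne
  · have h' : j < i := by omega
    by_cases hm : j ∈ D
    · exact (g2_lt_of_mem hD hm h' hi).ne
    · exact (g2_lt_of_notMem hD hm h' hi).ne'

noncomputable def perm2 (n : ℕ) (D : Finset ℕ) (hD : D ⊆ Finset.range (n-1)) :
    Equiv.Perm (Fin n) :=
  Equiv.ofBijective (fun i => ⟨g2 n D i.val, g2_lt_n hD i.isLt⟩)
    ((Finite.injective_iff_bijective).1 (fun i j h => by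
      by_contra hne
      exact g2_injOn hD i.isLt j.isLt (fun hv => hne (Fin.ext hv)) (by
        simpa [Fin.ext_iff] using h)))

lemma perm2_val {n : ℕ} (D : Finset ℕ) (hD : D ⊆ Finset.range (n-1)) (x : Fin n) :
    (perm2 n D hD x : ℕ) = g2 n D x.val := rfl

lemma perm2_pv {n : ℕ} (D : Finset ℕ) (hD : D ⊆ Finset.range (n-1)) {i : ℕ} (h : i < n) :
    pv (perm2 n D hD) i = g2 n D i := by
  rw [pv_pos _ h, perm2_val]

lemma perm2_descents {n : ℕ} (D : Finset ℕ) (hD : D ⊆ Finset.range (n-1)) :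
    descents (perm2 n D hD) = D := by
  ext i
  rw [mem_descents]
  constructor
  · intro ⟨h1, h2⟩
    rw [perm2_pv D hD (by omega), perm2_pv D hD (by omega)] at h2
    by_contra hm
    exact absurd (g2_lt_of_notMem hD hm (show i < i+1 by omega) (by omega)) (by omega)
  · intro hm
    have h1 : i < n - 1 := by have := hD hm; simpa using this
    refine ⟨h1, ?_⟩
    rw [perm2_pv D hD (by omega), perm2_pv D hD (by omega)]
    exact g2_lt_of_mem hD hm (show i < i+1 by omega) (by omega)

lemma perm2_avoids213 {n : ℕ} (D : Finset ℕ) (hD : D ⊆ Finset.range (n-1)) :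
    Avoids213 (perm2 n D hD) := by
  rintro ⟨i, j, k, hij, hjk, h1, h2⟩
  rw [Fin.lt_def] at hij hjk h1 h2
  rw [perm2_val, perm2_val] at h1 h2
  by_cases hm : (i : ℕ) ∈ D
  · exact absurd (g2_lt_of_mem hD hm (by omega) k.isLt) (by omega)
  · exact absurd (g2_lt_of_notMem hD hm hij j.isLt) (by omega)

lemma perm2_avoids231 {n : ℕ} (D : Finset ℕ) (hD : D ⊆ Finset.range (n-1)) :
    Avoids231 (perm2 n D hD) := by
  rintro ⟨i, j, k, hij, hjk, h1, h2⟩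
  rw [Fin.lt_def] at hij hjk h1 h2
  rw [perm2_val, perm2_val] at h1 h2
  by_cases hm : (i : ℕ) ∈ D
  · exact absurd (g2_lt_of_mem hD hm hij j.isLt) (by omega)
  · exact absurd (g2_lt_of_notMem hD hm (by omega) k.isLt) (by omega)

section Uniq2
variable {n : ℕ} {σ : Equiv.Perm (Fin n)}

lemma claimM (h213 : Avoids213 σ) {i k : Fin n} (hd : (i : ℕ) ∈ descents σ)
    (hik : i < k) : σ k < σ i := by
  rw [mem_descents] at hd
  obtain ⟨h1, h2⟩ := hd
  rw [pv_pos σ (show (i:ℕ)+1 < n by omega), pv_pos σ (show (i:ℕ) < n by omega)] at h2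
  have hii : (⟨(i:ℕ), by omega⟩ : Fin n) = i := rfl
  rw [hii] at h2
  by_contra hc
  push_neg at hc
  have hne : σ i ≠ σ k := fun h => (by exact absurd (σ.injective h) (by intro h2; rw [h2] at hik; exact lt_irrefl _ hik))
  have hlt : σ i < σ k := lt_of_le_of_ne hc hne
  rcases Nat.lt_or_ge ((i:ℕ)+1) (k:ℕ) with h | h
  · exact h213 ⟨i, ⟨(i:ℕ)+1, by omega⟩, k, by simp [Fin.lt_def], by simp [Fin.lt_def]; omega,
      h2, hlt⟩
  · have : (k : ℕ) = (i:ℕ)+1 := by rw [Fin.lt_def] at hik; omega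
    have : k = (⟨(i:ℕ)+1, by omega⟩ : Fin n) := Fin.ext this
    rw [this] at hlt
    omega

lemma claimm (h231 : Avoids231 σ) {i k : Fin n} (ha : (i : ℕ) ∈ ascents σ)
    (hik : i < k) : σ i < σ k := by
  rw [mem_ascents] at ha
  obtain ⟨h1, h2⟩ := ha
  rw [pv_pos σ (show (i:ℕ)+1 < n by omega), pv_pos σ (show (i:ℕ) < n by omega)] at h2
  have hii : (⟨(i:ℕ), by omega⟩ : Fin n) = i := rfl
  rw [hii] at h2
  by_contra hc
  push_neg at hc
  have hne : σ k ≠ σ i := fun h => (by exact absurd (σ.injective h) (by intro h2; rw [h2] at hik; exact lt_irrefl _ hik))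
  have hlt : σ k < σ i := lt_of_le_of_ne hc hne
  rcases Nat.lt_or_ge ((i:ℕ)+1) (k:ℕ) with h | h
  · exact h231 ⟨i, ⟨(i:ℕ)+1, by omega⟩, k, by simp [Fin.lt_def], by simp [Fin.lt_def]; omega,
      hlt, h2⟩
  · have : (k : ℕ) = (i:ℕ)+1 := by rw [Fin.lt_def] at hik; omega
    have : k = (⟨(i:ℕ)+1, by omega⟩ : Fin n) := Fin.ext this
    rw [this] at hlt
    omega

lemma uniq2_val (h213 : Avoids213 σ) (h231 : Avoids231 σ) (x : Fin n) :
    (σ x : ℕ) = g2 n (descents σ) x.val := by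
  set D := descents σ with hDdef
  have hD : D ⊆ Finset.range (n-1) := descents_subset σ
  by_cases hx : (x : ℕ) ∈ D
  · -- descent position: σ x is max of suffix
    have hxn : (x:ℕ) < n - 1 := by have := hD hx; simpa using this
    -- complement count
    have hcompl : (Finset.univ.filter fun j : Fin n => ¬ (σ j < σ x)) =
        (Finset.univ.filter fun j : Fin n => (j:ℕ) = (x:ℕ) ∨ ((j:ℕ) < (x:ℕ) ∧ (j:ℕ) ∈ D)) := by
      ext j
      simp only [Finset.mem_filter, Finset.mem_univ, true_and, not_lt]
      constructor
      · intro hle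
        by_cases hjx : j = x
        · exact Or.inl (by rw [hjx])
        · have hne : σ x ≠ σ j := fun h => hjx (σ.injective h.symm)
          have hlt : σ x < σ j := lt_of_le_of_ne hle hne
          rcases Fin.lt_or_lt_of_ne hjx with h | h
          · -- j < x
            right
            refine ⟨h, ?_⟩
            by_contra hjD
            have hja : (j:ℕ) ∈ ascents σ := by
              rw [ascents_eq]
              simp only [Finset.mem_sdiff, Finset.mem_range]
              exact ⟨by rw [Fin.lt_def] at h; omega, hjD⟩
            exact absurd (claimm h231 hja h) (by omega)
          · exact absurd (claimM h213 hx h) (by omega)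
      · rintro (heq | ⟨hlt, hjD⟩)
        · have : j = x := Fin.ext heq
          rw [this]
        · exact le_of_lt (claimM h213 hjD (by rwa [Fin.lt_def]))
    have hcard : (Finset.univ.filter fun j : Fin n =>
        (j:ℕ) = (x:ℕ) ∨ ((j:ℕ) < (x:ℕ) ∧ (j:ℕ) ∈ D)).card = 1 + cD D x.val := by
      rw [card_filter_fin n (fun m => m = (x:ℕ) ∨ (m < (x:ℕ) ∧ m ∈ D))]
      have : (Finset.range n).filter (fun m => m = (x:ℕ) ∨ (m < (x:ℕ) ∧ m ∈ D)) =
          insert (x:ℕ) (D ∩ Finset.range (x:ℕ)) := by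
        ext m
        simp only [Finset.mem_filter, Finset.mem_range, Finset.mem_insert, Finset.mem_inter]
        constructor
        · rintro ⟨hm, rfl | ⟨h1, h2⟩⟩
          · exact Or.inl rfl
          · exact Or.inr ⟨h2, h1⟩
        · rintro (rfl | ⟨h1, h2⟩)
          · exact ⟨x.isLt, Or.inl rfl⟩
          · exact ⟨by have := x.isLt; omega, Or.inr ⟨by simpa using h2, h1⟩⟩
      rw [this, Finset.card_insert_of_notMem (by simp), cD]
      omega
    have hsum := Finset.card_filter_add_card_filter_not
      (s := (Finset.univ : Finset (Fin n))) (p := fun j => σ j < σ x)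
    rw [hcompl, hcard, Finset.card_univ, Fintype.card_fin] at hsum
    have hval := perm_val_eq_card σ x
    have hcd : cD D x.val < D.card := cD_lt_card hx
    have hDcard : D.card ≤ n - 1 := by have := Finset.card_le_card hD; simpa using this
    simp only [g2, if_pos hx]
    omega
  · -- non-descent: σ x is min of suffix
    have hfilter : (Finset.univ.filter fun j : Fin n => σ j < σ x) =
        (Finset.univ.filter fun j : Fin n => (j:ℕ) < (x:ℕ) ∧ (j:ℕ) ∉ D) := by
      ext j
      simp only [Finset.mem_filter, Finset.mem_univ, true_and]
      constructor
      · intro hlt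
        have hjx : j ≠ x := fun h => by rw [h] at hlt; exact lt_irrefl _ hlt
        rcases Fin.lt_or_lt_of_ne hjx with h | h
        · refine ⟨by rwa [Fin.lt_def] at h, ?_⟩
          intro hjD
          exact absurd (claimM h213 hjD h) (by omega)
        · -- x < j: then x must be ascent (x ∉ D and x < n-1 since j > x)
          exfalso
          have hxa : (x:ℕ) ∈ ascents σ := by
            rw [ascents_eq]
            simp only [Finset.mem_sdiff, Finset.mem_range]
            have := j.isLt
            rw [Fin.lt_def] at h
            exact ⟨by omega, hx⟩
          exact absurd (claimm h231 hxa h) (by omega)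
      · rintro ⟨h1, h2⟩
        have hja : (j:ℕ) ∈ ascents σ := by
          rw [ascents_eq]
          simp only [Finset.mem_sdiff, Finset.mem_range]
          have := x.isLt
          exact ⟨by omega, h2⟩
        exact claimm h231 hja (by rwa [Fin.lt_def])
    have hcard : (Finset.univ.filter fun j : Fin n =>
        (j:ℕ) < (x:ℕ) ∧ (j:ℕ) ∉ D).card = (x:ℕ) - cD D x.val := by
      rw [card_filter_fin n (fun m => m < (x:ℕ) ∧ m ∉ D)]
      have : (Finset.range n).filter (fun m => m < (x:ℕ) ∧ m ∉ D) =
          Finset.range (x:ℕ) \ D := by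
        ext m
        simp only [Finset.mem_filter, Finset.mem_range, Finset.mem_sdiff]
        have := x.isLt
        constructor
        · rintro ⟨_, h1, h2⟩; exact ⟨h1, h2⟩
        · rintro ⟨h1, h2⟩; exact ⟨by omega, h1, h2⟩
      rw [this, card_range_sdiff]
    have hval := perm_val_eq_card σ x
    rw [hfilter, hcard] at hval
    simp only [g2, if_neg hx]
    exact hval

lemma uniq2 (h213 : Avoids213 σ) (h231 : Avoids231 σ) :
    σ = perm2 n (descents σ) (descents_subset σ) := by
  apply Equiv.ext
  intro x
  apply Fin.ext
  rw [perm2_val]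
  exact uniq2_val h213 h231 x

end Uniq2

section Class1
variable {n : ℕ} {S : Finset ℕ}

lemma eS_exists (n : ℕ) (S : Finset ℕ) (i : ℕ) : ∃ j, i ≤ j ∧ (j ∈ S ∨ n - 1 ≤ j) :=
  ⟨max i (n-1), le_max_left _ _, Or.inr (le_max_right _ _)⟩

noncomputable def eS (n : ℕ) (S : Finset ℕ) (i : ℕ) : ℕ :=
  Nat.find (eS_exists n S i)

lemma le_eS (n : ℕ) (S : Finset ℕ) (i : ℕ) : i ≤ eS n S i :=
  (Nat.find_spec (eS_exists n S i)).1

lemma eS_spec (n : ℕ) (S : Finset ℕ) (i : ℕ) : eS n S i ∈ S ∨ n - 1 ≤ eS n S i :=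
  (Nat.find_spec (eS_exists n S i)).2

lemma eS_le {i j : ℕ} (h1 : i ≤ j) (h2 : j ∈ S ∨ n - 1 ≤ j) : eS n S i ≤ j :=
  Nat.find_le ⟨h1, h2⟩

lemma eS_le_sub {i : ℕ} (h : i ≤ n - 1) : eS n S i ≤ n - 1 :=
  eS_le h (Or.inr le_rfl)

lemma eS_noasc {i : ℕ} : ∀ a ∈ S, ¬ (i ≤ a ∧ a < eS n S i) := by
  intro a ha ⟨h1, h2⟩
  exact (Nat.find_min (eS_exists n S i) h2) ⟨h1, Or.inl ha⟩

noncomputable def sS (S : Finset ℕ) (i : ℕ) : ℕ :=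
  if h : (S.filter (· < i)).Nonempty then (S.filter (· < i)).max' h + 1 else 0

lemma sS_le (S : Finset ℕ) (i : ℕ) : sS S i ≤ i := by
  unfold sS
  split
  · next h =>
    have := (S.filter (· < i)).max'_mem h
    simp only [Finset.mem_filter] at this
    omega
  · omega

lemma sS_max {i a : ℕ} (ha : a ∈ S) (h : a < i) : a < sS S i := by
  have hne : (S.filter (· < i)).Nonempty := ⟨a, Finset.mem_filter.2 ⟨ha, h⟩⟩
  unfold sS
  rw [dif_pos hne]
  have := Finset.le_max' (S.filter (· < i)) a (Finset.mem_filter.2 ⟨ha, h⟩)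
  omega

lemma sS_mem {i : ℕ} (h : 0 < sS S i) : sS S i - 1 ∈ S ∧ sS S i - 1 < i := by
  unfold sS at h ⊢
  split at h
  · next hne =>
    rw [dif_pos hne]
    have := (S.filter (· < i)).max'_mem hne
    simp only [Finset.mem_filter] at this
    simpa using this
  · omega

lemma block_eq {i k : ℕ} (hik : i ≤ k) (hk : k ≤ n - 1)
    (hno : ∀ a ∈ S, ¬ (i ≤ a ∧ a < k)) : eS n S i = eS n S k ∧ sS S i = sS S k := by
  constructor
  · have h1 : eS n S i ≤ eS n S k :=
      eS_le (le_trans hik (le_eS n S k)) (eS_spec n S k)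
    have hki : k ≤ eS n S i := by
      by_contra hc
      push_neg at hc
      rcases eS_spec n S i with hmem | hge
      · exact hno _ hmem ⟨le_eS n S i, hc⟩
      · omega
    have h2 : eS n S k ≤ eS n S i := eS_le hki (eS_spec n S i)
    omega
  · have : S.filter (· < i) = S.filter (· < k) := by
      ext a
      simp only [Finset.mem_filter]
      constructor
      · rintro ⟨h1, h2⟩; exact ⟨h1, by omega⟩
      · rintro ⟨h1, h2⟩
        refine ⟨h1, ?_⟩
        by_contra hc
        exact hno a h1 ⟨by omega, h2⟩
    unfold sS
    rw [this]

noncomputable def g1 (n : ℕ) (S : Finset ℕ) (i : ℕ) : ℕ := sS S i + (eS n S i - i)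

lemma g1_le_eS (n : ℕ) (S : Finset ℕ) (i : ℕ) : g1 n S i ≤ eS n S i := by
  have h1 := sS_le S i
  have h2 := le_eS n S i
  unfold g1
  omega

lemma g1_lt_n {i : ℕ} (hi : i < n) : g1 n S i < n := by
  have := g1_le_eS n S i
  have := eS_le_sub (S := S) (show i ≤ n - 1 by omega)
  omega

lemma g1_same {i k : ℕ} (hik : i < k) (hk : k < n)
    (hno : ∀ a ∈ S, ¬ (i ≤ a ∧ a < k)) : g1 n S k < g1 n S i := by
  obtain ⟨he, hs⟩ := block_eq (n := n) (le_of_lt hik) (by omega) hno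
  have h1 : k ≤ eS n S k := le_eS n S k
  unfold g1
  rw [← he, ← hs]
  have : i ≤ eS n S i := le_eS n S i
  rw [← he] at h1
  omega

lemma g1_diff {i k a : ℕ} (ha : a ∈ S) (h1 : i ≤ a) (h2 : a < k) :
    g1 n S i < g1 n S k := by
  have hei : eS n S i ≤ a := eS_le h1 (Or.inl ha)
  have hsk : a < sS S k := sS_max ha h2
  have := g1_le_eS n S i
  have : sS S k ≤ g1 n S k := by unfold g1; omega
  omega

lemma g1_injOn {i j : ℕ} (hi : i < n) (hj : j < n) (hij : i ≠ j) :
    g1 n S i ≠ g1 n S j := by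
  wlog h : i < j generalizing i j
  · exact (this hj hi (Ne.symm hij) (by omega)).symm
  by_cases hex : ∃ a ∈ S, i ≤ a ∧ a < j
  · obtain ⟨a, ha, h1, h2⟩ := hex
    exact (g1_diff ha h1 h2).ne
  · push_neg at hex
    exact (g1_same (n := n) h hj (fun a ha hc => absurd (hex a ha hc.1) (by omega))).ne'

noncomputable def perm1 (n : ℕ) (S : Finset ℕ) : Equiv.Perm (Fin n) :=
  Equiv.ofBijective (fun i => ⟨g1 n S i.val, g1_lt_n i.isLt⟩)
    ((Finite.injective_iff_bijective).1 (fun i j h => by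
      by_contra hne
      exact g1_injOn i.isLt j.isLt (fun hv => hne (Fin.ext hv)) (by
        simpa [Fin.ext_iff] using h)))

lemma perm1_val (n : ℕ) (S : Finset ℕ) (x : Fin n) :
    (perm1 n S x : ℕ) = g1 n S x.val := rfl

lemma perm1_pv (n : ℕ) (S : Finset ℕ) {i : ℕ} (h : i < n) :
    pv (perm1 n S) i = g1 n S i := by
  rw [pv_pos _ h, perm1_val]

lemma perm1_ascents (hS : S ⊆ Finset.range (n-1)) : ascents (perm1 n S) = S := by
  ext i
  rw [mem_ascents]
  constructor
  · intro ⟨h1, h2⟩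
    rw [perm1_pv n S (show i < n by omega), perm1_pv n S (show i+1 < n by omega)] at h2
    by_contra hm
    have hno : ∀ a ∈ S, ¬ (i ≤ a ∧ a < i + 1) := by
      intro a ha ⟨ha1, ha2⟩
      have : a = i := by omega
      exact hm (this ▸ ha)
    exact absurd (g1_same (n := n) (show i < i+1 by omega) (by omega) hno) (by omega)
  · intro hm
    have h1 : i < n - 1 := by have := hS hm; simpa using this
    refine ⟨h1, ?_⟩
    rw [perm1_pv n S (show i < n by omega), perm1_pv n S (show i+1 < n by omega)]
    exact g1_diff hm le_rfl (by omega)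

lemma perm1_avoids231 (n : ℕ) (S : Finset ℕ) : Avoids231 (perm1 n S) := by
  rintro ⟨i, j, k, hij, hjk, h1, h2⟩
  rw [Fin.lt_def] at hij hjk h1 h2
  rw [perm1_val, perm1_val] at h1 h2
  -- h1 : g1 k < g1 i, h2 : g1 i < g1 j
  by_cases hex : ∃ a ∈ S, (i:ℕ) ≤ a ∧ a < (k:ℕ)
  · obtain ⟨a, ha, ha1, ha2⟩ := hex
    exact absurd (g1_diff (n := n) ha ha1 ha2) (by omega)
  · push_neg at hex
    have hno : ∀ a ∈ S, ¬ ((i:ℕ) ≤ a ∧ a < (j:ℕ)) := by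
      intro a ha ⟨hb1, hb2⟩
      have := hex a ha hb1
      omega
    exact absurd (g1_same (n := n) hij j.isLt hno) (by omega)

lemma perm1_avoids312 (n : ℕ) (S : Finset ℕ) : Avoids312 (perm1 n S) := by
  rintro ⟨i, j, k, hij, hjk, h1, h2⟩
  rw [Fin.lt_def] at hij hjk h1 h2
  rw [perm1_val, perm1_val] at h1 h2
  -- h1 : g1 j < g1 k, h2 : g1 k < g1 i
  by_cases hex : ∃ a ∈ S, (i:ℕ) ≤ a ∧ a < (k:ℕ)
  · obtain ⟨a, ha, ha1, ha2⟩ := hex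
    exact absurd (g1_diff (n := n) ha ha1 ha2) (by omega)
  · push_neg at hex
    have hno : ∀ a ∈ S, ¬ ((j:ℕ) ≤ a ∧ a < (k:ℕ)) := by
      intro a ha ⟨hb1, hb2⟩
      have := hex a ha (by omega)
      omega
    exact absurd (g1_same (n := n) hjk k.isLt hno) (by omega)

end Class1

section Uniq1
variable {n : ℕ} {π : Equiv.Perm (Fin n)}

/-- Claim C : positions up to an ascent have smaller values than positions after it. -/
lemma claimC (h231 : Avoids231 π) (h312 : Avoids312 π) {a j k : ℕ}
    (ha : a ∈ ascents π) (hja : j ≤ a) (hak : a < k) (hk : k < n) :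
    pv π j < pv π k := by
  rw [mem_ascents] at ha
  obtain ⟨h1, h2⟩ := ha
  have hjn : j < n := by omega
  have han : a < n := by omega
  have ha1n : a + 1 < n := by omega
  rw [pv_pos π han, pv_pos π ha1n] at h2
  rw [pv_pos π hjn, pv_pos π hk]
  by_contra hc
  push_neg at hc
  have hjk : j ≠ k := by omega
  have hne : (π ⟨k, hk⟩ : ℕ) ≠ (π ⟨j, hjn⟩ : ℕ) := by
    intro h
    have := π.injective (Fin.ext h)
    simp only [Fin.ext_iff] at this
    omega
  have hlt : (π ⟨k, hk⟩ : ℕ) < (π ⟨j, hjn⟩ : ℕ) := by omega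
  rcases lt_trichotomy ((π ⟨k, hk⟩ : ℕ)) ((π ⟨a, han⟩ : ℕ)) with hka | hka | hka
  · -- π k < π a : use 231 on (a, a+1, k)
    have hk1 : a + 1 < k := by
      rcases Nat.lt_or_ge (a+1) k with h | h
      · exact h
      · have : k = a + 1 := by omega
        subst this
        omega
    exact h231 ⟨⟨a, han⟩, ⟨a+1, ha1n⟩, ⟨k, hk⟩, Fin.mk_lt_mk.2 (by omega),
      Fin.mk_lt_mk.2 hk1, Fin.lt_def.2 hka, Fin.lt_def.2 h2⟩
  · have : (⟨k, hk⟩ : Fin n) = ⟨a, han⟩ := π.injective (Fin.ext hka)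
    simp only [Fin.ext_iff] at this
    omega
  · -- π a < π k : then j < a, use 312 on (j, a, k)
    have hja' : j < a := by
      rcases Nat.lt_or_ge j a with h | h
      · exact h
      · have : j = a := by omega
        subst this
        omega
    exact h312 ⟨⟨j, hjn⟩, ⟨a, han⟩, ⟨k, hk⟩, Fin.mk_lt_mk.2 hja',
      Fin.mk_lt_mk.2 hak, Fin.lt_def.2 hka, Fin.lt_def.2 hlt⟩

/-- descents drop by exactly one. -/
lemma drop_one (h231 : Avoids231 π) (h312 : Avoids312 π) {i : ℕ}
    (h1 : i < n - 1) (h2 : i ∉ ascents π) : pv π (i+1) + 1 = pv π i := by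
  have hin : i < n := by omega
  have hi1n : i + 1 < n := by omega
  have hdesc : pv π (i+1) < pv π i := by
    have hne := pv_ne π hin hi1n (by omega)
    rw [mem_ascents] at h2
    have : ¬ (pv π i < pv π (i+1)) := fun h => h2 ⟨h1, h⟩
    omega
  by_contra hc
  rw [pv_pos π hin, pv_pos π hi1n] at hdesc hc
  -- the value v = π(i+1) + 1 < π(i), v < n
  set v : ℕ := (π ⟨i+1, hi1n⟩ : ℕ) + 1 with hv
  have hvlt : v < (π ⟨i, hin⟩ : ℕ) := by omega
  have hvn : v < n := lt_trans hvlt (π ⟨i, hin⟩).isLt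
  set m : Fin n := π.symm ⟨v, hvn⟩ with hm
  have hπm : (π m : ℕ) = v := by rw [hm]; simp
  have hmi : (m : ℕ) ≠ i := by
    intro h
    have : m = ⟨i, hin⟩ := Fin.ext h
    rw [this] at hπm
    omega
  have hmi1 : (m : ℕ) ≠ i + 1 := by
    intro h
    have : m = ⟨i+1, hi1n⟩ := Fin.ext h
    rw [this] at hπm
    omega
  rcases Nat.lt_or_ge (m : ℕ) i with h | h
  · -- 231 on (m, i, i+1) : π (i+1) < π m < π i
    exact h231 ⟨m, ⟨i, hin⟩, ⟨i+1, hi1n⟩, Fin.lt_def.2 h,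
      Fin.mk_lt_mk.2 (by omega), Fin.lt_def.2 (by omega), Fin.lt_def.2 (by omega)⟩
  · have h' : i + 1 < (m : ℕ) := by omega
    -- 312 on (i, i+1, m) : π (i+1) < π m < π i
    exact h312 ⟨⟨i, hin⟩, ⟨i+1, hi1n⟩, m, Fin.mk_lt_mk.2 (by omega), Fin.lt_def.2 h',
      Fin.lt_def.2 (by omega), Fin.lt_def.2 (by omega)⟩

lemma chain (h231 : Avoids231 π) (h312 : Avoids312 π) :
    ∀ d i, i < n → eS n (ascents π) i = i + d → pv π i = pv π (eS n (ascents π) i) + d := by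
  intro d
  induction d with
  | zero => intro i hi he; rw [he]; simp
  | succ d ih =>
    intro i hi he
    set S := ascents π with hS
    have hiS : i ∉ S := by
      intro h
      have := eS_le (n := n) (le_refl i) (Or.inl h)
      omega
    have hin1 : i < n - 1 := by
      rcases Nat.lt_or_ge i (n-1) with h | h
      · exact h
      · have := eS_le (n := n) (S := S) (le_refl i) (Or.inr h)
        omega
    have hno : ∀ a ∈ S, ¬ (i ≤ a ∧ a < i + 1) := by
      intro a ha ⟨ha1, ha2⟩
      have : a = i := by omega
      exact hiS (this ▸ ha)
    have heq : eS n S i = eS n S (i+1) := (block_eq (n := n) (by omega) (by omega) hno).1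
    have he1 : eS n S (i+1) = (i+1) + d := by omega
    have := ih (i+1) (by omega) he1
    have hd := drop_one h231 h312 hin1 hiS
    rw [heq]
    omega

lemma block_end_val (h231 : Avoids231 π) (h312 : Avoids312 π) {i : ℕ} (hi : i < n)
    (hei : eS n (ascents π) i = i) : pv π i = sS (ascents π) i := by
  set S := ascents π with hS
  have hkey : ∀ j : Fin n, π j < π ⟨i, hi⟩ ↔ (j : ℕ) < sS S i := by
    intro j
    constructor
    · intro hlt
      by_contra hc
      push_neg at hc
      rcases lt_trichotomy ((j : ℕ)) i with h | h | h
      · -- sS i ≤ j < i : same block, value larger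
        have hno : ∀ a ∈ S, ¬ ((j:ℕ) ≤ a ∧ a < i) := by
          intro a ha ⟨h1, h2⟩
          have := sS_max (S := S) ha h2
          omega
        have hej : eS n S (j:ℕ) = eS n S i := (block_eq (n := n) (by omega) (by omega) hno).1
        have hejv : eS n S (j:ℕ) = (j:ℕ) + (i - (j:ℕ)) := by omega
        have := chain h231 h312 (i - (j:ℕ)) (j:ℕ) j.isLt hejv
        rw [hej, hei] at this
        rw [pv_pos π j.isLt, pv_pos π hi] at this
        have hjj : (⟨(j:ℕ), j.isLt⟩ : Fin n) = j := rfl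
        rw [hjj] at this
        rw [Fin.lt_def] at hlt
        omega
      · have : j = ⟨i, hi⟩ := Fin.ext h
        rw [this] at hlt
        exact lt_irrefl _ hlt
      · -- i < j : i is an ascent (since eS i = i and i < n-1)
        have hiS : i ∈ S := by
          rcases eS_spec n S i with h' | h'
          · rwa [hei] at h'
          · rw [hei] at h'
            have := j.isLt
            omega
        have := claimC h231 h312 hiS (le_refl i) h j.isLt
        rw [pv_pos π hi, pv_pos π j.isLt] at this
        have hjj : (⟨(j:ℕ), j.isLt⟩ : Fin n) = j := rfl
        rw [hjj] at this
        rw [Fin.lt_def] at hlt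
        omega
    · intro hlt
      have hpos : 0 < sS S i := by omega
      obtain ⟨haS, hai⟩ := sS_mem hpos
      have := claimC h231 h312 haS (show (j:ℕ) ≤ sS S i - 1 by omega)
        (show sS S i - 1 < i by omega) hi
      rw [pv_pos π j.isLt, pv_pos π hi] at this
      have hjj : (⟨(j:ℕ), j.isLt⟩ : Fin n) = j := rfl
      rwa [hjj] at this
  have hsle : sS S i ≤ i := sS_le S i
  rw [pv_pos π hi, perm_val_eq_card π ⟨i, hi⟩]
  have hfeq : (Finset.univ.filter fun j : Fin n => π j < π ⟨i, hi⟩) =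
      (Finset.univ.filter fun j : Fin n => (j:ℕ) < sS S i) := by
    ext j
    simp only [Finset.mem_filter, Finset.mem_univ, true_and]
    exact hkey j
  rw [hfeq, card_filter_fin n (fun m => m < sS S i),
    filter_range_lt_eq _ _ (by omega), Finset.card_range]

lemma uniq1_val (h231 : Avoids231 π) (h312 : Avoids312 π) (x : Fin n) :
    (π x : ℕ) = g1 n (ascents π) x.val := by
  set S := ascents π with hS
  set i := (x : ℕ) with hx
  have hi : i < n := x.isLt
  have hie : eS n S i = i + (eS n S i - i) := by
    have := le_eS n S i
    omega
  have hchain := chain h231 h312 (eS n S i - i) i hi hie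
  have hee : eS n S (eS n S i) = eS n S i := by
    have h1 := eS_le (n := n) (le_refl (eS n S i)) (eS_spec n S i)
    have h2 := le_eS n S (eS n S i)
    omega
  have hein : eS n S i < n := by
    have := eS_le_sub (n := n) (S := S) (show i ≤ n - 1 by omega)
    omega
  have hbev := block_end_val h231 h312 hein hee
  have hseq : sS S i = sS S (eS n S i) := by
    have hno : ∀ a ∈ S, ¬ (i ≤ a ∧ a < eS n S i) := eS_noasc
    exact (block_eq (n := n) (le_eS n S i) (by omega) hno).2
  have hpv : pv π i = (π x : ℕ) := pv_pos π hi
  rw [hbev, ← hseq] at hchain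
  unfold g1
  omega

lemma uniq1 (h231 : Avoids231 π) (h312 : Avoids312 π) : π = perm1 n (ascents π) := by
  apply Equiv.ext
  intro x
  apply Fin.ext
  rw [perm1_val]
  exact uniq1_val h231 h312 x

end Uniq1

lemma perm2_congr {n : ℕ} {D D' : Finset ℕ} (h : D = D') {h1 : D ⊆ Finset.range (n-1)}
    {h2 : D' ⊆ Finset.range (n-1)} : perm2 n D h1 = perm2 n D' h2 := by
  subst h
  rfl

theorem equidistribution_swap_231_312_vs_213_231 (n a b c d : ℕ) :
    Nat.card {π : Equiv.Perm (Fin n) // (Avoids231 π ∧ Avoids312 π) ∧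
      asc π = a ∧ des π = b ∧ MNA π = c ∧ MND π = d} =
    Nat.card {σ : Equiv.Perm (Fin n) // (Avoids213 σ ∧ Avoids231 σ) ∧
      des σ = a ∧ asc σ = b ∧ MND σ = c ∧ MNA σ = d} := by
  apply Nat.card_congr
  refine
    { toFun := fun p => ⟨perm2 n (ascents p.1) (ascents_subset p.1), ?_⟩
      invFun := fun q => ⟨perm1 n (descents q.1), ?_⟩
      left_inv := ?_
      right_inv := ?_ }
  · obtain ⟨π, ⟨⟨h231, h312⟩, ha, hb, hc, hd⟩⟩ := p
    refine ⟨⟨perm2_avoids213 _ _, perm2_avoids231 _ _⟩, ?_, ?_, ?_, ?_⟩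
    · show (descents _).card = a
      rw [perm2_descents]
      exact ha
    · show (ascents _).card = b
      rw [ascents_eq, perm2_descents, ← descents_eq]
      exact hb
    · unfold MND
      rw [perm2_descents]
      exact hc
    · unfold MNA
      rw [ascents_eq, perm2_descents, ← descents_eq]
      exact hd
  · obtain ⟨σ, ⟨⟨h213, h231⟩, ha, hb, hc, hd⟩⟩ := q
    refine ⟨⟨perm1_avoids231 _ _, perm1_avoids312 _ _⟩, ?_, ?_, ?_, ?_⟩
    · show (ascents _).card = a
      rw [perm1_ascents (descents_subset σ)]
      exact ha
    · show (descents _).card = b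
      rw [descents_eq, perm1_ascents (descents_subset σ), ← ascents_eq]
      exact hb
    · unfold MNA
      rw [perm1_ascents (descents_subset σ)]
      exact hc
    · unfold MND
      rw [descents_eq, perm1_ascents (descents_subset σ), ← ascents_eq]
      exact hd
  · intro p
    obtain ⟨π, ⟨⟨h231, h312⟩, hstats⟩⟩ := p
    apply Subtype.ext
    show perm1 n (descents (perm2 n (ascents π) (ascents_subset π))) = π
    rw [perm2_descents]
    exact (uniq1 h231 h312).symm
  · intro q
    obtain ⟨σ, ⟨⟨h213, h231⟩, hstats⟩⟩ := q
    apply Subtype.ext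
    have e1 : ascents (perm1 n (descents σ)) = descents σ :=
      perm1_ascents (descents_subset σ)
    exact (perm2_congr (h1 := ascents_subset _) e1).trans (uniq2 h213 h231).symm
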